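/- Let B be a Hamel basis of ℝ (a basis of ℝ as a ℚ-vector space), and let b₀ ∈ B be an element whose coefficient in the unique representation of the real number 1 as a finite rational linear combination of elements of B is nonzero. Then the set V = span_ℚ(B \ {b₀}) is a Vitali set: for every x ∈ ℝ there exists exactly one v ∈ V such that x − v ∈ ℚ. -/

import Mathlib

/-- If `B` is a Hamel basis of `ℝ` and `b₀ ∈ B` has nonzero coefficient in the (unique)
representation of `1` as a finite rational linear combination of elements of `B`, then
`span ℚ (B \ {b₀})` is a Vitali set: every real is Vitali-equivalent to exactly one of
its members. -/
theorem span_erase_hamel_basis_is_vitali (B : Set ℝ)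
    (hind : LinearIndependent ℚ ((↑) : B → ℝ))
    (hspan : Submodule.span ℚ B = ⊤)
    (b₀ : ℝ) (hb₀ : b₀ ∈ B)
    (c : B →₀ ℚ)
    (hc : Finsupp.linearCombination ℚ ((↑) : B → ℝ) c = 1)
    (hc₀ : c ⟨b₀, hb₀⟩ ≠ 0) :
    ∀ x : ℝ, ∃! v : ℝ,
      v ∈ Submodule.span ℚ (B \ {b₀}) ∧ ∃ q : ℚ, x - v = (q : ℝ) := by
  set V := Submodule.span ℚ (B \ {b₀}) with hV
  have himg : B \ {b₀} = ((↑) : B → ℝ) '' ({⟨b₀, hb₀⟩}ᶜ) := by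
    ext y
    constructor
    · rintro ⟨hyB, hy⟩
      exact ⟨⟨y, hyB⟩, by simpa [Subtype.ext_iff] using hy, rfl⟩
    · rintro ⟨⟨z, hz⟩, hne, rfl⟩
      exact ⟨hz, by simpa [Subtype.ext_iff] using hne⟩
  -- 1 is not in V
  have h1V : (1 : ℝ) ∉ V := by
    intro h1
    rw [hV, himg, Finsupp.mem_span_image_iff_linearCombination] at h1
    obtain ⟨l, hlsupp, hl⟩ := h1
    have : l = c := hind (by rw [hl, hc])
    subst this
    exact hc₀ ((Finsupp.mem_supported' ℚ l).1 hlsupp ⟨b₀, hb₀⟩ (by simp))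
  -- every real is in V ⊔ span {b₀}
  have htop : ∀ y : ℝ, y ∈ V ⊔ Submodule.span ℚ ({b₀} : Set ℝ) := by
    intro y
    have h1 : Submodule.span ℚ B ≤ V ⊔ Submodule.span ℚ ({b₀} : Set ℝ) := by
      rw [hV, ← Submodule.span_union]
      apply Submodule.span_mono
      intro z hz
      by_cases h : z = b₀
      · exact Or.inr (h ▸ rfl)
      · exact Or.inl ⟨hz, h⟩
    exact h1 (hspan ▸ Submodule.mem_top)
  obtain ⟨w, hwV, s1, hs1, h1eq⟩ := Submodule.mem_sup.1 (htop 1)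
  obtain ⟨s, rfl⟩ := Submodule.mem_span_singleton.1 hs1
  have hs : s ≠ 0 := by
    rintro rfl
    simp at h1eq
    exact h1V (h1eq ▸ hwV)
  have hsne : (s : ℝ) ≠ 0 := by exact_mod_cast hs
  have hb : (s : ℝ) * b₀ = 1 - w := by
    rw [Rat.smul_def] at h1eq; linarith
  intro x
  obtain ⟨v₁, hv₁, t1, ht1, hxeq⟩ := Submodule.mem_sup.1 (htop x)
  obtain ⟨t, rfl⟩ := Submodule.mem_span_singleton.1 ht1
  have key : x - (v₁ - (t / s) • w) = ((t / s : ℚ) : ℝ) := by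
    rw [Rat.smul_def, ← hxeq, Rat.smul_def]
    push_cast
    field_simp
    linear_combination (t : ℝ) * hb
  have hv'V : v₁ - (t / s) • w ∈ V := V.sub_mem hv₁ (V.smul_mem _ hwV)
  refine ⟨v₁ - (t / s) • w, ⟨hv'V, t / s, key⟩, ?_⟩
  rintro v ⟨hvV, q, hq⟩
  have hdiff : v - (v₁ - (t / s) • w) = ((t / s - q : ℚ) : ℝ) := by
    push_cast
    push_cast at key
    linarith [hq, key]
  by_cases hqq : (t / s : ℚ) = q
  · have h0 : v - (v₁ - (t / s) • w) = 0 := by rw [hdiff, hqq]; simp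
    linarith [h0]
  · exfalso
    apply h1V
    have hmem : ((t / s - q : ℚ) : ℝ) ∈ V := hdiff ▸ V.sub_mem hvV hv'V
    have hne : ((t / s - q : ℚ) : ℝ) ≠ 0 := by
      exact_mod_cast sub_ne_zero.2 hqq
    have h1 : (1 : ℝ) = ((t / s - q)⁻¹ : ℚ) • ((t / s - q : ℚ) : ℝ) := by
      rw [Rat.smul_def, Rat.cast_inv]
      exact (inv_mul_cancel₀ hne).symm
    rw [h1]
    exact V.smul_mem _ hmem
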